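/- Let A be a transposed Poisson algebra and b an element of the transposed Poisson center A^A. Then the principal ideal Ab is a Poisson ideal of A: for all a,a' ∈ A, {a',ab} = {a',a}b ∈ Ab. -/
import Mathlib


open TensorProduct

/-- A transposed Poisson algebra structure on a commutative unital `k`-algebra `A`:
a Lie bracket satisfying the transposed Leibniz rule `2a{b,c} = {ab,c} + {b,ac}`. -/
structure TPA (k A : Type*) [Field k] [CharZero k] [CommRing A] [Algebra k A] where
  br : A →ₗ[k] A →ₗ[k] A
  skew : ∀ a b, br a b = - br b a
  jacobi : ∀ a b c, br a (br b c) = br (br a b) c + br b (br a c)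
  leibniz : ∀ a b c, 2 * a * br b c = br (a * b) c + br b (a * c)

/-- The transposed Poisson center `A^A = {b | b{a,a'} = {ba,a'} for all a,a'}`. -/
def TPA.center {k A : Type*} [Field k] [CharZero k] [CommRing A] [Algebra k A]
    (P : TPA k A) : Set A := {b | ∀ a a', b * P.br a a' = P.br (b * a) a'}

theorem principal_ideal_of_center_is_poisson_ideal {k A : Type*} [Field k]
    [CharZero k] [CommRing A] [Algebra k A] (P : TPA k A) (b : A)
    (hb : b ∈ P.center) :
    ∀ a a' : A, P.br a' (a * b) = P.br a' a * b ∧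
      P.br a' (a * b) ∈ Ideal.span ({b} : Set A) := by
  intro a a'
  have key : P.br a' (a * b) = P.br a' a * b := by
    have h1 := hb a a'
    have h2 := P.skew (a * b) a'
    have h3 := P.skew a a'
    rw [mul_comm a b, ← h1] at h2
    rw [eq_comm, neg_eq_iff_eq_neg] at h2
    rw [mul_comm a b, h2, h3]
    ring
  refine ⟨key, key ▸ Ideal.mem_span_singleton.mpr ⟨P.br a' a, mul_comm _ _⟩⟩
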